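/- Sharpness of the 1/4 constant: for the parallelogram K ⊆ ℝ² with vertices (0,0), (1,1), (0,1), (−1,0), and the direction ω = (1,0), it holds max{F_K(ω), F_K(−ω)} = (1/4)·B_K(ω). -/

import Mathlib

open scoped RealInnerProductSpace

/-- A point of the Euclidean plane. -/
noncomputable def pt2 (a b : ℝ) : EuclideanSpace ℝ (Fin 2) :=
  (WithLp.equiv 2 (Fin 2 → ℝ)).symm ![a, b]

/-- The support function `H_K(ω) = sup {⟨x, ω⟩ : x ∈ K}`. -/
noncomputable def suppFn (K : Set (EuclideanSpace ℝ (Fin 2)))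
    (ω : EuclideanSpace ℝ (Fin 2)) : ℝ :=
  sSup ((fun x => ⟪x, ω⟫) '' K)

/-- The breadth `B_K(ω) = H_K(ω) + H_K(-ω)`. -/
noncomputable def breadthFn (K : Set (EuclideanSpace ℝ (Fin 2)))
    (ω : EuclideanSpace ℝ (Fin 2)) : ℝ :=
  suppFn K ω + suppFn K (-ω)

/-- The cap `K_{μ,ω} = {x ∈ K : ⟨x,ω⟩ ≥ μ}`. -/
noncomputable def capSet (K : Set (EuclideanSpace ℝ (Fin 2)))
    (ω : EuclideanSpace ℝ (Fin 2)) (μ : ℝ) : Set (EuclideanSpace ℝ (Fin 2)) :=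
  {x ∈ K | μ ≤ ⟪x, ω⟫}

/-- The reflection `T_{μ,ω}(x) = x - 2ω(⟨ω,x⟩ - μ)`. -/
noncomputable def reflMap (ω : EuclideanSpace ℝ (Fin 2)) (μ : ℝ)
    (x : EuclideanSpace ℝ (Fin 2)) : EuclideanSpace ℝ (Fin 2) :=
  x - (2 * (⟪ω, x⟫ - μ)) • ω

/-- The maximal folding cap `K_ω = ∪ {K_{μ,ω} : T_{μ,ω}(K_{μ,ω}) ⊆ K}`. -/
noncomputable def maxFoldCap (K : Set (EuclideanSpace ℝ (Fin 2)))
    (ω : EuclideanSpace ℝ (Fin 2)) : Set (EuclideanSpace ℝ (Fin 2)) :=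
  ⋃ μ ∈ {μ : ℝ | reflMap ω μ '' capSet K ω μ ⊆ K}, capSet K ω μ

/-- The maximal folding height `F_K(ω) = B_{K_ω}(ω)`. -/
noncomputable def foldHeight (K : Set (EuclideanSpace ℝ (Fin 2)))
    (ω : EuclideanSpace ℝ (Fin 2)) : ℝ :=
  breadthFn (maxFoldCap K ω) ω

lemma pt2_zero (a b : ℝ) : pt2 a b 0 = a := rfl
lemma pt2_one (a b : ℝ) : pt2 a b 1 = b := rfl

lemma inner_pt2 (x : EuclideanSpace ℝ (Fin 2)) (a b : ℝ) :
    ⟪x, pt2 a b⟫ = x 0 * a + x 1 * b := by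
  simp [pt2, PiLp.inner_apply, Fin.sum_univ_two, RCLike.inner_apply]; ring

lemma inner_pt2' (x : EuclideanSpace ℝ (Fin 2)) (a b : ℝ) :
    ⟪pt2 a b, x⟫ = a * x 0 + b * x 1 := by
  rw [real_inner_comm, inner_pt2]; ring

lemma inner_neg_pt2 (x : EuclideanSpace ℝ (Fin 2)) (a b : ℝ) :
    ⟪x, -pt2 a b⟫ = -(x 0 * a + x 1 * b) := by
  simp only [inner_neg_right, inner_pt2]

lemma inner_neg_pt2' (x : EuclideanSpace ℝ (Fin 2)) (a b : ℝ) :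
    ⟪-pt2 a b, x⟫ = -(a * x 0 + b * x 1) := by
  simp only [inner_neg_left, inner_pt2']

-- reflection coordinates for ω = pt2 1 0
lemma reflP_zero (μ : ℝ) (x : EuclideanSpace ℝ (Fin 2)) :
    reflMap (pt2 1 0) μ x 0 = 2 * μ - x 0 := by
  simp [reflMap, inner_pt2', PiLp.sub_apply, PiLp.smul_apply, pt2_zero, pt2_zero, pt2_one, smul_eq_mul]
  ring

lemma reflP_one (μ : ℝ) (x : EuclideanSpace ℝ (Fin 2)) :
    reflMap (pt2 1 0) μ x 1 = x 1 := by
  simp [reflMap, inner_pt2', PiLp.sub_apply, PiLp.smul_apply, pt2_zero, pt2_one, smul_eq_mul]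

lemma reflN_zero (μ : ℝ) (x : EuclideanSpace ℝ (Fin 2)) :
    reflMap (-pt2 1 0) μ x 0 = -(2 * μ) - x 0 := by
  simp [reflMap, inner_neg_pt2', PiLp.sub_apply, PiLp.smul_apply, PiLp.neg_apply,
    pt2_zero, pt2_zero, pt2_one, smul_eq_mul, inner_pt2']
  ring

lemma reflN_one (μ : ℝ) (x : EuclideanSpace ℝ (Fin 2)) :
    reflMap (-pt2 1 0) μ x 1 = x 1 := by
  simp [reflMap, inner_neg_pt2', PiLp.sub_apply, PiLp.smul_apply, PiLp.neg_apply,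
    pt2_zero, pt2_one, smul_eq_mul]

lemma Kmem (x : EuclideanSpace ℝ (Fin 2)) :
    x ∈ convexHull ℝ {pt2 0 0, pt2 1 1, pt2 0 1, pt2 (-1) 0} ↔
      0 ≤ x 1 ∧ x 1 ≤ 1 ∧ x 1 - 1 ≤ x 0 ∧ x 0 ≤ x 1 := by
  constructor
  · intro hx
    have hconv : Convex ℝ {y : EuclideanSpace ℝ (Fin 2) |
        0 ≤ y 1 ∧ y 1 ≤ 1 ∧ y 1 - 1 ≤ y 0 ∧ y 0 ≤ y 1} := by
      intro u hu v hv a b ha hb hab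
      obtain ⟨h1,h2,h3,h4⟩ := hu
      obtain ⟨h5,h6,h7,h8⟩ := hv
      have e0 : (a • u + b • v) 0 = a * u 0 + b * v 0 := rfl
      have e1 : (a • u + b • v) 1 = a * u 1 + b * v 1 := rfl
      refine ⟨?_, ?_, ?_, ?_⟩ <;> simp only [e0, e1] <;> nlinarith
    have := convexHull_min ?_ hconv hx
    · exact this
    · intro y hy
      simp only [Set.mem_insert_iff, Set.mem_singleton_iff] at hy
      rcases hy with rfl|rfl|rfl|rfl <;>
        simp [Set.mem_setOf_eq, pt2_zero, pt2_one]
  · rintro ⟨h1, h2, h3, h4⟩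
    set t := x 1 with ht
    set s := x 1 - x 0 with hs
    have hz : ∀ i ∈ (Finset.univ : Finset (Fin 4)),
        (![pt2 0 0, pt2 1 1, pt2 0 1, pt2 (-1) 0] : Fin 4 → EuclideanSpace ℝ (Fin 2)) i ∈
          ({pt2 0 0, pt2 1 1, pt2 0 1, pt2 (-1) 0} : Set (EuclideanSpace ℝ (Fin 2))) := by
      intro i _; fin_cases i <;> simp
    by_cases hcase : t + s ≤ 1
    · have := Finset.centerMass_mem_convexHull (Finset.univ : Finset (Fin 4))
        (w := ![1 - t - s, t, 0, s]) ?_ ?_ hz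
      · convert this using 1
        rw [Finset.centerMass_eq_of_sum_1]
        · refine (PiLp.ext ?_).symm
          intro i
          fin_cases i <;>
            simp [Fin.sum_univ_four, pt2, PiLp.add_apply, PiLp.smul_apply, smul_eq_mul] <;> ring
        · simp [Fin.sum_univ_four]; try ring
      · intro i _; fin_cases i <;> simp <;> linarith
      · simp [Fin.sum_univ_four]; try linarith
    · push_neg at hcase
      have := Finset.centerMass_mem_convexHull (Finset.univ : Finset (Fin 4))
        (w := ![0, 1 - s, t + s - 1, 1 - t]) ?_ ?_ hz
      · convert this using 1
        rw [Finset.centerMass_eq_of_sum_1]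
        · refine (PiLp.ext ?_).symm
          intro i
          fin_cases i <;>
            simp [Fin.sum_univ_four, pt2, PiLp.add_apply, PiLp.smul_apply, smul_eq_mul] <;> ring
        · simp [Fin.sum_univ_four]; try ring
      · intro i _; fin_cases i <;> simp <;> linarith
      · simp [Fin.sum_univ_four]; try linarith

lemma suppFn_eq {S : Set (EuclideanSpace ℝ (Fin 2))} {ω : EuclideanSpace ℝ (Fin 2)} {a : ℝ}
    (h : IsGreatest ((fun x => ⟪x, ω⟫) '' S) a) : suppFn S ω = a :=
  h.csSup_eq

example : True := trivial

noncomputable abbrev Kset : Set (EuclideanSpace ℝ (Fin 2)) :=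
  convexHull ℝ {pt2 0 0, pt2 1 1, pt2 0 1, pt2 (-1) 0}

lemma mem_Kset (a b : ℝ) (h1 : 0 ≤ b) (h2 : b ≤ 1) (h3 : b - 1 ≤ a) (h4 : a ≤ b) :
    pt2 a b ∈ Kset := by
  rw [Kmem]; refine ⟨?_, ?_, ?_, ?_⟩ <;> simp only [pt2_zero, pt2_one] <;> linarith

lemma valP : reflMap (pt2 1 0) (1/2) '' capSet Kset (pt2 1 0) (1/2) ⊆ Kset := by
  rintro _ ⟨x, ⟨hxK, hμ⟩, rfl⟩
  simp only [inner_pt2] at hμ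
  rw [Kmem] at hxK ⊢
  obtain ⟨h1, h2, h3, h4⟩ := hxK
  rw [reflP_zero, reflP_one]
  refine ⟨h1, h2, by linarith, by linarith⟩

lemma valN : reflMap (-pt2 1 0) (1/2) '' capSet Kset (-pt2 1 0) (1/2) ⊆ Kset := by
  rintro _ ⟨x, ⟨hxK, hμ⟩, rfl⟩
  simp only [inner_neg_pt2] at hμ
  rw [Kmem] at hxK ⊢
  obtain ⟨h1, h2, h3, h4⟩ := hxK
  rw [reflN_zero, reflN_one]
  refine ⟨h1, h2, by linarith, by linarith⟩

lemma suppK_pos : suppFn Kset (pt2 1 0) = 1 := by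
  apply suppFn_eq
  constructor
  · exact ⟨pt2 1 1, mem_Kset 1 1 (by norm_num) le_rfl (by norm_num) le_rfl,
      by simp only [inner_pt2, pt2_zero, pt2_one]; ring⟩
  · rintro _ ⟨x, hx, rfl⟩
    obtain ⟨h1, h2, h3, h4⟩ := (Kmem x).1 hx
    simp only [inner_pt2]; linarith

lemma suppK_neg : suppFn Kset (-pt2 1 0) = 1 := by
  apply suppFn_eq
  constructor
  · exact ⟨pt2 (-1) 0, mem_Kset (-1) 0 le_rfl (by norm_num) (by norm_num) (by norm_num),
      by simp only [inner_neg_pt2, pt2_zero, pt2_one]; ring⟩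
  · rintro _ ⟨x, hx, rfl⟩
    obtain ⟨h1, h2, h3, h4⟩ := (Kmem x).1 hx
    simp only [inner_neg_pt2]; linarith

lemma mem_maxP {x : EuclideanSpace ℝ (Fin 2)} (hx : x ∈ capSet Kset (pt2 1 0) (1/2)) :
    x ∈ maxFoldCap Kset (pt2 1 0) :=
  Set.mem_biUnion valP hx

lemma mem_maxN {x : EuclideanSpace ℝ (Fin 2)} (hx : x ∈ capSet Kset (-pt2 1 0) (1/2)) :
    x ∈ maxFoldCap Kset (-pt2 1 0) :=
  Set.mem_biUnion valN hx

lemma suppMP_pos : suppFn (maxFoldCap Kset (pt2 1 0)) (pt2 1 0) = 1 := by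
  apply suppFn_eq
  constructor
  · refine ⟨pt2 1 1, mem_maxP ⟨mem_Kset 1 1 (by norm_num) le_rfl (by norm_num) le_rfl, ?_⟩,
      by simp only [inner_pt2, pt2_zero, pt2_one]; ring⟩
    simp only [inner_pt2, pt2_zero, pt2_one]; norm_num
  · rintro _ ⟨x, hx, rfl⟩
    simp only [maxFoldCap, Set.mem_iUnion, Set.mem_setOf_eq] at hx
    obtain ⟨μ, hV, hxK, hxμ⟩ := hx
    obtain ⟨h1, h2, h3, h4⟩ := (Kmem x).1 hxK
    simp only [inner_pt2]; linarith

lemma suppMP_neg : suppFn (maxFoldCap Kset (pt2 1 0)) (-pt2 1 0) = -(1/2) := by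
  apply suppFn_eq
  constructor
  · refine ⟨pt2 (1/2) (1/2),
      mem_maxP ⟨mem_Kset (1/2) (1/2) (by norm_num) (by norm_num) (by norm_num) le_rfl, ?_⟩,
      by simp only [inner_neg_pt2, pt2_zero, pt2_one]; ring⟩
    simp only [inner_pt2, pt2_zero, pt2_one]; norm_num
  · rintro _ ⟨x, hx, rfl⟩
    simp only [maxFoldCap, Set.mem_iUnion, Set.mem_setOf_eq] at hx
    obtain ⟨μ, hV, hxK, hxμ⟩ := hx
    simp only [inner_pt2] at hxμ
    obtain ⟨h1, h2, h3, h4⟩ := (Kmem x).1 hxK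
    simp only [inner_neg_pt2, pt2_zero, pt2_one]
    rcases le_or_gt (1/2 : ℝ) μ with hc | hc
    · nlinarith
    · exfalso
      have hmem : pt2 1 1 ∈ capSet Kset (pt2 1 0) μ := by
        refine ⟨mem_Kset 1 1 (by norm_num) le_rfl (by norm_num) le_rfl, ?_⟩
        simp only [inner_pt2, pt2_zero, pt2_one]; nlinarith
      have := hV (Set.mem_image_of_mem _ hmem)
      obtain ⟨g1, g2, g3, g4⟩ := (Kmem _).1 this
      rw [reflP_zero, reflP_one, pt2_zero, pt2_one] at g3
      linarith

lemma suppMN_pos : suppFn (maxFoldCap Kset (-pt2 1 0)) (-pt2 1 0) = 1 := by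
  apply suppFn_eq
  constructor
  · refine ⟨pt2 (-1) 0,
      mem_maxN ⟨mem_Kset (-1) 0 le_rfl (by norm_num) (by norm_num) (by norm_num), ?_⟩,
      by simp only [inner_neg_pt2, pt2_zero, pt2_one]; ring⟩
    simp only [inner_neg_pt2, pt2_zero, pt2_one]; norm_num
  · rintro _ ⟨x, hx, rfl⟩
    simp only [maxFoldCap, Set.mem_iUnion, Set.mem_setOf_eq] at hx
    obtain ⟨μ, hV, hxK, hxμ⟩ := hx
    obtain ⟨h1, h2, h3, h4⟩ := (Kmem x).1 hxK
    simp only [inner_neg_pt2]; linarith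

lemma suppMN_neg : suppFn (maxFoldCap Kset (-pt2 1 0)) (- -pt2 1 0) = -(1/2) := by
  rw [neg_neg]
  apply suppFn_eq
  constructor
  · refine ⟨pt2 (-(1/2)) (1/2),
      mem_maxN ⟨mem_Kset (-(1/2)) (1/2) (by norm_num) (by norm_num) (by norm_num)
        (by norm_num), ?_⟩,
      by simp only [inner_pt2, pt2_zero, pt2_one]; ring⟩
    simp only [inner_neg_pt2, pt2_zero, pt2_one]; norm_num
  · rintro _ ⟨x, hx, rfl⟩
    simp only [maxFoldCap, Set.mem_iUnion, Set.mem_setOf_eq] at hx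
    obtain ⟨μ, hV, hxK, hxμ⟩ := hx
    simp only [inner_neg_pt2] at hxμ
    obtain ⟨h1, h2, h3, h4⟩ := (Kmem x).1 hxK
    simp only [inner_pt2]
    rcases le_or_gt (1/2 : ℝ) μ with hc | hc
    · nlinarith
    · exfalso
      have hmem : pt2 (-1) 0 ∈ capSet Kset (-pt2 1 0) μ := by
        refine ⟨mem_Kset (-1) 0 le_rfl (by norm_num) (by norm_num) (by norm_num), ?_⟩
        simp only [inner_neg_pt2, pt2_zero, pt2_one]; nlinarith
      have := hV (Set.mem_image_of_mem _ hmem)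
      obtain ⟨g1, g2, g3, g4⟩ := (Kmem _).1 this
      rw [reflN_zero, reflN_one, pt2_zero, pt2_one] at g4
      linarith


/-- Sharpness of the 1/4 constant: for the parallelogram with vertices
`(0,0), (1,1), (0,1), (-1,0)` and `ω = (1,0)`, one has
`max {F_K(ω), F_K(-ω)} = (1/4) B_K(ω)`. -/
theorem quarter_constant_sharp :
    max (foldHeight (convexHull ℝ {pt2 0 0, pt2 1 1, pt2 0 1, pt2 (-1) 0}) (pt2 1 0))
        (foldHeight (convexHull ℝ {pt2 0 0, pt2 1 1, pt2 0 1, pt2 (-1) 0}) (-pt2 1 0)) =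
      (1 / 4) * breadthFn (convexHull ℝ {pt2 0 0, pt2 1 1, pt2 0 1, pt2 (-1) 0}) (pt2 1 0) := by
  show max (foldHeight Kset (pt2 1 0)) (foldHeight Kset (-pt2 1 0)) =
    (1/4) * breadthFn Kset (pt2 1 0)
  unfold foldHeight breadthFn
  rw [suppMP_pos, suppMP_neg, suppMN_pos, suppMN_neg, suppK_pos, suppK_neg]
  norm_num
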